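/- Let K ⊆ ℝ² be a compact convex set with nonempty interior and let σ = st(K) be its Steiner point. Then σ is the unique minimizer of the function x ↦ Area(F_x(K)): for every x ∈ ℝ² with x ≠ σ, Area(F_σ(K)) < Area(F_x(K)). -/

import Mathlib

open Metric Real Set MeasureTheory
open scoped RealInnerProductSpace

noncomputable section

/-- The Euclidean plane. -/
abbrev E2 := EuclideanSpace ℝ (Fin 2)

/-- The unit vector `u_θ = (cos θ, sin θ)`. -/
def uvec (θ : ℝ) : E2 := (WithLp.equiv 2 (Fin 2 → ℝ)).symm ![Real.cos θ, Real.sin θ]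

/-- The vector `v_θ = (−sin θ, cos θ)`. -/
def vvec (θ : ℝ) : E2 := (WithLp.equiv 2 (Fin 2 → ℝ)).symm ![-Real.sin θ, Real.cos θ]

/-- The Voronoi flower of `L` with respect to `x`: the union over `s ∈ L` of the closed
balls admitting the segment `[x, s]` as a diameter. -/
def vflower (x : E2) (L : Set E2) : Set E2 :=
  ⋃ s ∈ L, closedBall ((2:ℝ)⁻¹ • (x + s)) (‖s - x‖ / 2)

/-- The support function of `L` with respect to `x`: `p_x(L, w) = sup_{s ∈ L} ⟨s − x, w⟩`. -/
def suppf (x : E2) (L : Set E2) (w : E2) : ℝ :=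
  sSup ((fun s => ⟪s - x, w⟫) '' L)

/-- The Steiner point: `st(K) = (1/π) ∫₀^{2π} p₀(K, u_θ) · u_θ dθ`. -/
def steinerPt (K : Set E2) : E2 :=
  (π⁻¹ : ℝ) • ∫ θ in (0:ℝ)..(2*π), suppf 0 K (uvec θ) • uvec θ

/-! ### Basic lemmas on `uvec`, `vvec` -/

lemma uvec0 (θ : ℝ) : uvec θ 0 = Real.cos θ := rfl
lemma uvec1 (θ : ℝ) : uvec θ 1 = Real.sin θ := rfl
lemma vvec0 (θ : ℝ) : vvec θ 0 = -Real.sin θ := rfl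
lemma vvec1 (θ : ℝ) : vvec θ 1 = Real.cos θ := rfl

lemma inner_coords (w c : E2) : ⟪w, c⟫ = w 0 * c 0 + w 1 * c 1 := by
  simp [PiLp.inner_apply, Fin.sum_univ_two, RCLike.inner_apply]; ring

lemma inner_uvec (w : E2) (θ : ℝ) : ⟪w, uvec θ⟫ = w 0 * Real.cos θ + w 1 * Real.sin θ := by
  simp [PiLp.inner_apply, Fin.sum_univ_two, uvec0, uvec1, RCLike.inner_apply]; ring

lemma inner_vvec (w : E2) (θ : ℝ) : ⟪w, vvec θ⟫ = -(w 0 * Real.sin θ) + w 1 * Real.cos θ := by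
  simp [PiLp.inner_apply, Fin.sum_univ_two, vvec0, vvec1, RCLike.inner_apply]; ring

lemma uvec_add_pi (θ : ℝ) : uvec (θ + π) = -uvec θ := by
  ext i
  fin_cases i <;> simp [uvec0, uvec1, Real.cos_add_pi, Real.sin_add_pi]

lemma uvec_periodic (θ : ℝ) : uvec (θ + 2 * π) = uvec θ := by
  ext i
  fin_cases i <;> simp [uvec0, uvec1, Real.cos_add_two_pi, Real.sin_add_two_pi]

lemma norm_uvec (θ : ℝ) : ‖uvec θ‖ = 1 := by
  have : ⟪uvec θ, uvec θ⟫ = 1 := by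
    rw [inner_uvec, uvec0, uvec1]; nlinarith [Real.sin_sq_add_cos_sq θ]
  have h := real_inner_self_eq_norm_sq (uvec θ)
  nlinarith [norm_nonneg (uvec θ)]

lemma uvec_vvec_basis (y : E2) (θ : ℝ) : ⟪y, uvec θ⟫ • uvec θ + ⟪y, vvec θ⟫ • vvec θ = y := by
  ext i
  have h := Real.sin_sq_add_cos_sq θ
  fin_cases i <;>
    simp [inner_uvec, inner_vvec, uvec0, uvec1, vvec0, vvec1, PiLp.smul_apply, PiLp.add_apply,
      smul_eq_mul]
  · linear_combination y 0 * h
  · linear_combination y 1 * h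

lemma norm_sub_uvec (θ φ : ℝ) : ‖uvec θ - uvec φ‖ ≤ 2 * |θ - φ| := by
  have h2 : |Real.sin ((θ - φ)/2)| ≤ |θ - φ| / 2 := by
    have := Real.abs_sin_le_abs (x := (θ - φ)/2)
    simpa [abs_div] using this
  have h0 : |Real.cos θ - Real.cos φ| ≤ |θ - φ| := by
    rw [Real.cos_sub_cos]
    rw [abs_mul, abs_mul, abs_neg]
    calc |(2 : ℝ)| * |Real.sin ((θ + φ)/2)| * |Real.sin ((θ - φ)/2)|
        ≤ 2 * 1 * (|θ - φ| / 2) := by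
          apply mul_le_mul _ h2 (abs_nonneg _) (by positivity)
          rw [abs_two]
          have := Real.abs_sin_le_one ((θ + φ)/2)
          nlinarith
      _ = |θ - φ| := by ring
  have h1 : |Real.sin θ - Real.sin φ| ≤ |θ - φ| := by
    rw [Real.sin_sub_sin, abs_mul, abs_mul]
    calc |(2 : ℝ)| * |Real.sin ((θ - φ)/2)| * |Real.cos ((θ + φ)/2)|
        ≤ 2 * (|θ - φ| / 2) * 1 := by
          apply mul_le_mul _ (Real.abs_cos_le_one _) (abs_nonneg _) (by positivity)
          rw [abs_two]
          nlinarith [abs_nonneg (Real.sin ((θ - φ)/2))]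
      _ = |θ - φ| := by ring
  rw [EuclideanSpace.norm_eq]
  have e : ∑ i : Fin 2, ‖(uvec θ - uvec φ) i‖ ^ 2
      = (Real.cos θ - Real.cos φ)^2 + (Real.sin θ - Real.sin φ)^2 := by
    simp [Fin.sum_univ_two, sq_abs]
    rfl
  rw [e]
  have h0' : (Real.cos θ - Real.cos φ)^2 ≤ (θ-φ)^2 := by
    rw [← sq_abs, ← sq_abs (θ-φ)]; exact pow_le_pow_left₀ (abs_nonneg _) h0 2
  have h1' : (Real.sin θ - Real.sin φ)^2 ≤ (θ-φ)^2 := by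
    rw [← sq_abs, ← sq_abs (θ-φ)]; exact pow_le_pow_left₀ (abs_nonneg _) h1 2
  have h3 : √((Real.cos θ - Real.cos φ)^2 + (Real.sin θ - Real.sin φ)^2) ≤ √((2*|θ-φ|)^2) := by
    apply Real.sqrt_le_sqrt
    nlinarith [sq_abs (θ - φ)]
  calc _ ≤ √((2*|θ-φ|)^2) := h3
    _ = 2*|θ-φ| := by rw [Real.sqrt_sq (by positivity)]

lemma uvec_lipschitz : LipschitzWith 2 uvec := by
  apply LipschitzWith.of_dist_le_mul
  intro θ φ
  simpa [dist_eq_norm, Real.dist_eq] using norm_sub_uvec θ φ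

lemma uvec_continuous : Continuous uvec := uvec_lipschitz.continuous

lemma vvec_eq_uvec (θ : ℝ) : vvec θ = uvec (θ + π/2) := by
  ext i
  fin_cases i <;>
    simp [uvec0, uvec1, vvec0, vvec1, Real.cos_add, Real.sin_add, Real.cos_pi_div_two,
      Real.sin_pi_div_two]

lemma vvec_continuous : Continuous vvec := by
  simp only [funext vvec_eq_uvec]
  exact uvec_continuous.comp (by continuity)

lemma hasDerivAt_uvec (θ : ℝ) : HasDerivAt uvec (vvec θ) θ := by
  set E0 : E2 := (WithLp.equiv 2 (Fin 2 → ℝ)).symm ![1, 0] with hE0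
  set E1 : E2 := (WithLp.equiv 2 (Fin 2 → ℝ)).symm ![0, 1] with hE1
  have hu : uvec = fun φ => Real.cos φ • E0 + Real.sin φ • E1 := by
    funext φ; ext i
    fin_cases i <;>
      simp [uvec0, uvec1, hE0, hE1, PiLp.add_apply, PiLp.smul_apply, smul_eq_mul] <;> rfl
  have hv : vvec θ = (-Real.sin θ) • E0 + Real.cos θ • E1 := by
    ext i
    fin_cases i <;>
      simp [vvec0, vvec1, hE0, hE1, PiLp.add_apply, PiLp.smul_apply, smul_eq_mul] <;> rfl
  rw [hu, hv]
  exact ((Real.hasDerivAt_cos θ).smul_const E0).add ((Real.hasDerivAt_sin θ).smul_const E1)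

lemma hasDerivAt_vvec (θ : ℝ) : HasDerivAt vvec (-uvec θ) θ := by
  have h1 : HasDerivAt (fun φ : ℝ => φ + π/2) 1 θ := by
    simpa using (hasDerivAt_id θ).add_const (π/2)
  have h2 := (hasDerivAt_uvec (θ + π/2)).scomp θ h1
  have h3 : vvec (θ + π/2) = -uvec θ := by
    rw [vvec_eq_uvec]
    have : θ + π/2 + π/2 = θ + π := by ring
    rw [this, uvec_add_pi]
  have h4 : (fun φ : ℝ => uvec (φ + π/2)) = vvec := by
    funext φ; rw [vvec_eq_uvec]
  rw [← h4, ← h3]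
  rw [one_smul] at h2
  exact h2

/-! ### Support function -/

lemma suppf_zero_eq (L : Set E2) (w : E2) :
    suppf 0 L w = sSup ((fun s => ⟪s, w⟫) '' L) := by
  simp [suppf]

lemma suppf_exists_max {K : Set E2} (hKc : IsCompact K) (hne : K.Nonempty) (w : E2) :
    ∃ s ∈ K, suppf 0 K w = ⟪s, w⟫ ∧ ∀ t ∈ K, ⟪t, w⟫ ≤ ⟪s, w⟫ := by
  obtain ⟨s, hsK, hmax⟩ := hKc.exists_isMaxOn (f := fun s : E2 => ⟪s, w⟫) hne
    (Continuous.continuousOn (continuous_id.inner continuous_const))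
  refine ⟨s, hsK, ?_, fun t ht => hmax ht⟩
  rw [suppf_zero_eq]
  apply IsGreatest.csSup_eq
  exact ⟨⟨s, hsK, rfl⟩, by rintro _ ⟨t, ht, rfl⟩; exact hmax ht⟩

lemma le_suppf {K : Set E2} (hKc : IsCompact K) (hne : K.Nonempty) {t : E2} (ht : t ∈ K)
    (w : E2) : ⟪t, w⟫ ≤ suppf 0 K w := by
  obtain ⟨s, _, hs, hmax⟩ := suppf_exists_max hKc hne w
  rw [hs]; exact hmax t ht

lemma suppf_sub_le {K : Set E2} (hKc : IsCompact K) (hne : K.Nonempty) {R : ℝ}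
    (hR : ∀ s ∈ K, ‖s‖ ≤ R) (z z' : E2) :
    suppf 0 K z - suppf 0 K z' ≤ R * ‖z - z'‖ := by
  obtain ⟨s, hsK, hs, _⟩ := suppf_exists_max hKc hne z
  have h1 : ⟪s, z'⟫ ≤ suppf 0 K z' := le_suppf hKc hne hsK z'
  have h2 : ⟪s, z - z'⟫ ≤ R * ‖z - z'‖ := by
    calc ⟪s, z - z'⟫ ≤ ‖s‖ * ‖z - z'‖ := real_inner_le_norm _ _
      _ ≤ R * ‖z - z'‖ := by
          apply mul_le_mul_of_nonneg_right (hR s hsK) (norm_nonneg _)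
  rw [hs]
  have : ⟪s, z⟫ - ⟪s, z'⟫ = ⟪s, z - z'⟫ := by rw [inner_sub_right]
  linarith

lemma suppf_cont {K : Set E2} (hKc : IsCompact K) (hne : K.Nonempty) :
    Continuous (fun z : E2 => suppf 0 K z) := by
  obtain ⟨R, hR⟩ := hKc.isBounded.exists_norm_le
  have hR' : ∀ s ∈ K, ‖s‖ ≤ max R 0 := fun s hs => le_trans (hR s hs) (le_max_left _ _)
  apply LipschitzWith.continuous (K := Real.toNNReal (max R 0))
  apply LipschitzWith.of_dist_le_mul
  intro z z'
  rw [Real.dist_eq, dist_eq_norm]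
  have h1 := suppf_sub_le hKc hne hR' z z'
  have h2 := suppf_sub_le hKc hne hR' z' z
  rw [norm_sub_rev z' z] at h2
  rw [Real.coe_toNNReal _ (le_max_right R 0)]
  rw [abs_le]
  constructor <;> linarith

lemma suppf_abs_le {K : Set E2} (hKc : IsCompact K) (hKne : K.Nonempty) {R : ℝ}
    (hR : ∀ s ∈ K, ‖s‖ ≤ R) (θ : ℝ) : |suppf 0 K (uvec θ)| ≤ R := by
  obtain ⟨s, hsK, hs, _⟩ := suppf_exists_max hKc hKne (uvec θ)
  obtain ⟨t, htK⟩ := hKne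
  have h1 : ⟪t, uvec θ⟫ ≤ suppf 0 K (uvec θ) := le_suppf hKc ⟨t, htK⟩ htK _
  have h2 : |⟪s, uvec θ⟫| ≤ R := by
    calc |⟪s, uvec θ⟫| ≤ ‖s‖ * ‖uvec θ‖ := abs_real_inner_le_norm _ _
      _ ≤ R := by rw [norm_uvec, mul_one]; exact hR s hsK
  have h3 : |⟪t, uvec θ⟫| ≤ R := by
    calc |⟪t, uvec θ⟫| ≤ ‖t‖ * ‖uvec θ‖ := abs_real_inner_le_norm _ _
      _ ≤ R := by rw [norm_uvec, mul_one]; exact hR t htK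
  rw [hs, abs_le] at *
  constructor <;> [skip; exact h2.2]
  have := h3.1
  linarith

/-! ### The area of the flower in polar coordinates -/

lemma flower_area {K : Set E2} (hKc : IsCompact K) (hne : K.Nonempty) (x : E2) :
    (volume (vflower x K)).toReal
      = ∫ θ in (0:ℝ)..(2*π), (max (suppf 0 K (uvec θ) - ⟪x, uvec θ⟫) 0)^2 / 2 := by
  obtain ⟨R0, hR0⟩ := hKc.isBounded.exists_norm_le
  set R : ℝ := max R0 0 + ‖x‖ with hRdef
  have hR : ∀ s ∈ K, ‖s - x‖ ≤ R := by
    intro s hs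
    calc ‖s - x‖ ≤ ‖s‖ + ‖x‖ := norm_sub_le _ _
      _ ≤ R := by
          have h1 : ‖s‖ ≤ max R0 0 := le_trans (hR0 s hs) (le_max_left _ _)
          rw [hRdef]; linarith
  have hR0' : 0 ≤ R := by rw [hRdef]; positivity
  set ρ : ℝ → ℝ := fun θ => max (suppf 0 K (uvec θ) - ⟪x, uvec θ⟫) 0 with hρ
  have hρc : Continuous ρ := (((suppf_cont hKc hne).comp uvec_continuous).sub
    (continuous_const.inner uvec_continuous)).max continuous_const
  have hρnn : ∀ θ, 0 ≤ ρ θ := fun θ => le_max_right _ _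
  have hρbd : ∀ θ, ρ θ ≤ R := by
    intro θ
    apply max_le _ hR0'
    obtain ⟨s, hsK, hs, _⟩ := suppf_exists_max hKc hne (uvec θ)
    rw [hs, ← inner_sub_left]
    calc ⟪s - x, uvec θ⟫ ≤ ‖s - x‖ * ‖uvec θ‖ := real_inner_le_norm _ _
      _ ≤ R := by rw [norm_uvec, mul_one]; exact hR s hsK
  -- the translated flower
  set T : Set E2 := {z | ‖z‖^2 ≤ suppf 0 K z - ⟪x, z⟫} with hT
  have hTmem : ∀ z : E2, z ∈ T ↔ ∃ s ∈ K, ‖z‖^2 ≤ ⟪s - x, z⟫ := by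
    intro z
    obtain ⟨s₀, hs₀K, hs₀, hmax⟩ := suppf_exists_max hKc hne z
    constructor
    · intro hz
      refine ⟨s₀, hs₀K, ?_⟩
      rw [inner_sub_left, ← hs₀]
      exact hz
    · rintro ⟨s, hsK, hs⟩
      show ‖z‖^2 ≤ suppf 0 K z - ⟪x, z⟫
      rw [inner_sub_left] at hs
      have := le_suppf hKc hne hsK z
      linarith
  -- membership in the defining balls
  have hball : ∀ (s y : E2), y ∈ closedBall ((2:ℝ)⁻¹ • (x + s)) (‖s - x‖ / 2)
      ↔ ‖y - x‖^2 ≤ ⟪s - x, y - x⟫ := by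
    intro s y
    rw [mem_closedBall, dist_eq_norm]
    have hid : ‖y - (2:ℝ)⁻¹ • (x + s)‖^2
        = ‖y - x‖^2 - ⟪s - x, y - x⟫ + (‖s - x‖/2)^2 := by
      have e : y - (2:ℝ)⁻¹ • (x + s) = (y - x) - (2:ℝ)⁻¹ • (s - x) := by module
      rw [e, norm_sub_sq_real, real_inner_smul_right, norm_smul, real_inner_comm]
      rw [Real.norm_eq_abs]
      rw [show |(2:ℝ)⁻¹| = 2⁻¹ by rw [abs_of_pos]; norm_num]
      ring
    constructor
    · intro h
      have h2 := pow_le_pow_left₀ (norm_nonneg (y - (2:ℝ)⁻¹ • (x + s))) h 2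
      linarith [hid]
    · intro h
      nlinarith [norm_nonneg (y - (2:ℝ)⁻¹ • (x + s)), norm_nonneg (s - x), hid]
  -- the flower is the translate of T
  have himg : vflower x K = (fun z => x + z) '' T := by
    ext y
    simp only [vflower, Set.mem_iUnion, exists_prop, Set.mem_image]
    constructor
    · rintro ⟨s, hsK, hy⟩
      exact ⟨y - x, (hTmem _).mpr ⟨s, hsK, (hball s y).mp hy⟩, by abel⟩
    · rintro ⟨z, hz, rfl⟩
      obtain ⟨s, hsK, hs⟩ := (hTmem z).mp hz
      refine ⟨s, hsK, (hball s (x + z)).mpr ?_⟩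
      rwa [add_sub_cancel_left]
  have hTclosed : IsClosed T :=
    isClosed_le (continuous_norm.pow 2)
      ((suppf_cont hKc hne).sub (continuous_const.inner continuous_id))
  have hTmeas : MeasurableSet T := hTclosed.measurableSet
  have hvol : volume (vflower x K) = volume T := by
    rw [himg]
    have e : (fun z : E2 => x + z) '' T = (fun z : E2 => -x + z) ⁻¹' T := by
      ext z
      simp only [Set.mem_image, Set.mem_preimage]
      constructor
      · rintro ⟨w, hw, rfl⟩; simpa using hw
      · intro hz; exact ⟨-x + z, hz, by abel⟩
    rw [e, measure_preimage_add]
  -- bound on T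
  have hTbd : T ⊆ closedBall 0 R := by
    intro z hz
    obtain ⟨s, hsK, hs⟩ := (hTmem z).mp hz
    rw [mem_closedBall, dist_zero_right]
    rcases eq_or_lt_of_le (norm_nonneg z) with h0 | h0
    · rw [← h0]; exact hR0'
    · have h1 : ⟪s - x, z⟫ ≤ R * ‖z‖ := by
        calc ⟪s - x, z⟫ ≤ ‖s - x‖ * ‖z‖ := real_inner_le_norm _ _
          _ ≤ R * ‖z‖ := mul_le_mul_of_nonneg_right (hR s hsK) (norm_nonneg _)
      nlinarith
  -- transfer to ℝ × ℝ
  set mkE : ℝ × ℝ → E2 := fun p => (WithLp.equiv 2 (Fin 2 → ℝ)).symm ![p.1, p.2] with hmk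
  have hMP : MeasurePreserving mkE (volume : Measure (ℝ × ℝ)) (volume : Measure E2) := by
    have h1 := (EuclideanSpace.volume_preserving_symm_measurableEquiv_toLp (ι := Fin 2)).symm
    have h2 := (volume_preserving_finTwoArrow ℝ).symm
    have h3 := h1.comp h2
    exact h3
  set T' : Set (ℝ × ℝ) := mkE ⁻¹' T with hT'
  have hT'meas : MeasurableSet T' := hTmeas.preimage hMP.measurable
  have hvol2 : volume T = volume T' := (hMP.measure_preimage hTmeas.nullMeasurableSet).symm
  -- indicator integral
  have hInd : (volume T').toReal = ∫ p : ℝ × ℝ, T'.indicator (fun _ => (1:ℝ)) p :=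
    (integral_indicator_one hT'meas).symm
  have hpolar := integral_comp_polarCoord_symm (T'.indicator (fun _ => (1:ℝ)))
  -- the radial region
  set A : Set (ℝ × ℝ) := {p | 0 < p.1 ∧ p.1 ≤ ρ p.2} with hA
  have hAmeas : MeasurableSet A := by
    apply MeasurableSet.inter
    · exact measurableSet_lt measurable_const measurable_fst
    · exact measurableSet_le measurable_fst (hρc.measurable.comp measurable_snd)
  set G : ℝ × ℝ → ℝ := A.indicator (fun p => p.1) with hG
  -- identification of the integrand on the polar target
  have htarget : polarCoord.target = Ioi (0:ℝ) ×ˢ Ioo (-π) π := rfl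
  have hmkpt : ∀ p : ℝ × ℝ, mkE (polarCoord.symm p) = p.1 • uvec p.2 := by
    intro p
    have hpt : polarCoord.symm p = (p.1 * Real.cos p.2, p.1 * Real.sin p.2) := rfl
    ext i
    fin_cases i <;>
      simp [hpt, hmk, uvec0, uvec1, PiLp.smul_apply, smul_eq_mul] <;> rfl
  have hiff : ∀ p : ℝ × ℝ, 0 < p.1 → ((p.1 • uvec p.2 ∈ T) ↔ p.1 ≤ ρ p.2) := by
    intro p hr
    obtain ⟨s₀, hs₀K, hs₀, hmax⟩ := suppf_exists_max hKc hne (uvec p.2)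
    have hnrm : ‖p.1 • uvec p.2‖^2 = p.1^2 := by
      rw [norm_smul, norm_uvec, mul_one, Real.norm_eq_abs, sq_abs]
    constructor
    · intro hmem
      obtain ⟨s, hsK, hs⟩ := (hTmem _).mp hmem
      rw [hnrm, real_inner_smul_right] at hs
      have h1 : p.1 ≤ ⟪s - x, uvec p.2⟫ := by nlinarith
      have h2 : ⟪s - x, uvec p.2⟫ ≤ suppf 0 K (uvec p.2) - ⟪x, uvec p.2⟫ := by
        rw [inner_sub_left]
        have := le_suppf hKc hne hsK (uvec p.2)
        linarith
      calc p.1 ≤ suppf 0 K (uvec p.2) - ⟪x, uvec p.2⟫ := le_trans h1 h2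
        _ ≤ ρ p.2 := le_max_left _ _
    · intro hle
      have hρpos : 0 < ρ p.2 := lt_of_lt_of_le hr hle
      have hρeq : ρ p.2 = suppf 0 K (uvec p.2) - ⟪x, uvec p.2⟫ := by
        rcases le_or_gt (suppf 0 K (uvec p.2) - ⟪x, uvec p.2⟫) 0 with h | h
        · exfalso
          have : ρ p.2 = 0 := max_eq_right h
          rw [this] at hρpos; exact lt_irrefl _ hρpos
        · exact max_eq_left h.le
      apply (hTmem _).mpr
      refine ⟨s₀, hs₀K, ?_⟩
      rw [hnrm, real_inner_smul_right, inner_sub_left, ← hs₀]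
      rw [hρeq] at hle
      nlinarith
  have hcong : ∀ p ∈ polarCoord.target,
      p.1 • (T'.indicator (fun _ => (1:ℝ)) (polarCoord.symm p)) = G p := by
    intro p hp
    rw [htarget, Set.mem_prod] at hp
    obtain ⟨hr, hθ⟩ := hp
    rw [Set.mem_Ioi] at hr
    have hmemiff : polarCoord.symm p ∈ T' ↔ p.1 ≤ ρ p.2 := by
      rw [hT', Set.mem_preimage, hmkpt p]
      exact hiff p hr
    by_cases h : p.1 ≤ ρ p.2
    · rw [Set.indicator_of_mem (hmemiff.mpr h), hG,
        Set.indicator_of_mem (show p ∈ A from ⟨hr, h⟩)]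
      simp
    · rw [Set.indicator_of_notMem (fun hc => h (hmemiff.mp hc)), hG,
        Set.indicator_of_notMem (fun hc : p ∈ A => h hc.2)]
      simp
  -- rewrite the polar integral
  have hpolar2 : (volume T').toReal = ∫ p in polarCoord.target, G p := by
    rw [hInd, ← hpolar]
    exact setIntegral_congr_fun (μ := volume) polarCoord.open_target.measurableSet hcong
  -- Fubini
  set H : ℝ × ℝ → ℝ := polarCoord.target.indicator G with hH
  have hGmeas : Measurable G := measurable_fst.indicator hAmeas
  have hHmeas : Measurable H := hGmeas.indicator polarCoord.open_target.measurableSet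
  have hGbd : ∀ p, ‖G p‖ ≤ R := by
    intro p
    rw [hG, Real.norm_eq_abs]
    rcases Set.indicator_eq_zero_or_self A (fun p : ℝ × ℝ => p.1) p with h | h
    · rw [h, abs_zero]; exact hR0'
    · rw [h]
      by_cases hp : p ∈ A
      · obtain ⟨h1, h2⟩ := hp
        rw [abs_of_pos h1]
        exact le_trans h2 (hρbd p.2)
      · rw [Set.indicator_of_notMem hp] at h
        rw [← h, abs_zero]; exact hR0'
  have hHbd : ∀ p, ‖H p‖ ≤ R := by
    intro p
    rw [hH]
    rcases Set.indicator_eq_zero_or_self polarCoord.target G p with h | h <;> rw [h]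
    · rw [norm_zero]; exact hR0'
    · exact hGbd p
  set S : Set (ℝ × ℝ) := Ioc (0:ℝ) R ×ˢ Ioc (-π) π with hS
  have hSmeas : MeasurableSet S := measurableSet_Ioc.prod measurableSet_Ioc
  have hSfin : volume S ≠ ⊤ := by
    rw [hS, Measure.volume_eq_prod, Measure.prod_prod]
    exact (ENNReal.mul_lt_top measure_Ioc_lt_top measure_Ioc_lt_top).ne
  have hHsupp : ∀ p, p ∉ S → H p = 0 := by
    intro p hp
    rw [hH]
    by_cases ht : p ∈ polarCoord.target
    · rw [Set.indicator_of_mem ht, hG]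
      by_cases hA' : p ∈ A
      · exfalso
        apply hp
        rw [htarget, Set.mem_prod] at ht
        refine ⟨⟨hA'.1, le_trans hA'.2 (hρbd p.2)⟩, ?_⟩
        exact ⟨ht.2.1, ht.2.2.le⟩
      · exact Set.indicator_of_notMem hA' _
    · exact Set.indicator_of_notMem ht _
  have hHint : Integrable H (volume : Measure (ℝ × ℝ)) := by
    have hHS : H = S.indicator H := by
      funext p
      by_cases hp : p ∈ S
      · rw [Set.indicator_of_mem hp]
      · rw [Set.indicator_of_notMem hp, hHsupp p hp]
    rw [hHS]
    rw [integrable_indicator_iff hSmeas]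
    apply Measure.integrableOn_of_bounded hSfin hHmeas.aestronglyMeasurable
    exact Filter.Eventually.of_forall fun p => hHbd p
  have hfub : (∫ p : ℝ × ℝ, H p) = ∫ θ : ℝ, (∫ r : ℝ, H (r, θ)) := by
    rw [Measure.volume_eq_prod]
    rw [Measure.volume_eq_prod] at hHint
    exact integral_prod_symm H hHint
  -- inner integral
  have hinner : (fun θ : ℝ => ∫ r : ℝ, H (r, θ))
      = (Ioo (-π) π).indicator (fun θ => ρ θ^2/2) := by
    funext θ
    by_cases hθ : θ ∈ Ioo (-π) π
    · rw [Set.indicator_of_mem hθ]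
      have e1 : (fun r : ℝ => H (r, θ)) = (Ioc 0 (ρ θ)).indicator id := by
        funext r
        rw [hH]
        by_cases hr : 0 < r
        · have hmem : (r, θ) ∈ polarCoord.target := by
            rw [htarget, Set.mem_prod]
            exact ⟨hr, hθ⟩
          rw [Set.indicator_of_mem hmem, hG]
          by_cases hA' : (r, θ) ∈ A
          · rw [Set.indicator_of_mem hA',
              Set.indicator_of_mem (show r ∈ Ioc 0 (ρ θ) from ⟨hA'.1, hA'.2⟩)]
            rfl
          · rw [Set.indicator_of_notMem hA', Set.indicator_of_notMem]
            intro hc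
            exact hA' ⟨hc.1, hc.2⟩
        · have hnt : (r, θ) ∉ polarCoord.target := by
            rw [htarget, Set.mem_prod]
            intro hc
            exact hr hc.1
          rw [Set.indicator_of_notMem hnt, Set.indicator_of_notMem]
          intro hc
          exact hr hc.1
      rw [e1, integral_indicator measurableSet_Ioc]
      have e2 : (∫ r in Ioc (0:ℝ) (ρ θ), (id r : ℝ)) = ∫ r in (0:ℝ)..(ρ θ), r :=
        (intervalIntegral.integral_of_le (hρnn θ)).symm
      rw [e2, integral_id]
      ring
    · rw [Set.indicator_of_notMem hθ]
      have e1 : (fun r : ℝ => H (r, θ)) = fun _ => (0:ℝ) := by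
        funext r
        rw [hH, Set.indicator_of_notMem]
        rw [htarget, Set.mem_prod]
        intro hc
        exact hθ hc.2
      rw [e1, integral_zero]
  -- outer integral and periodicity
  have hper : Function.Periodic (fun θ => ρ θ^2/2) (2*π) := by
    intro θ
    simp only [hρ]
    rw [uvec_periodic]
  have houter : (∫ θ : ℝ, ((Ioo (-π) π).indicator (fun θ => ρ θ^2/2)) θ)
      = ∫ θ in (0:ℝ)..(2*π), ρ θ^2/2 := by
    rw [integral_indicator measurableSet_Ioo, ← integral_Ioc_eq_integral_Ioo,
      ← intervalIntegral.integral_of_le (by linarith [Real.pi_pos] : -π ≤ π)]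
    have e := hper.intervalIntegral_add_eq (-π) 0
    rw [show -π + 2*π = π by ring, zero_add] at e
    exact e
  -- put everything together
  have hTfin : volume T ≠ ⊤ := by
    apply ne_of_lt
    exact lt_of_le_of_lt (measure_mono hTbd) (measure_closedBall_lt_top)
  calc (volume (vflower x K)).toReal = (volume T').toReal := by rw [hvol, hvol2]
    _ = ∫ p in polarCoord.target, G p := hpolar2
    _ = ∫ p : ℝ × ℝ, H p := (integral_indicator polarCoord.open_target.measurableSet).symm
    _ = ∫ θ : ℝ, (∫ r : ℝ, H (r, θ)) := hfub
    _ = ∫ θ in (0:ℝ)..(2*π), ρ θ^2/2 := by rw [hinner]; exact houter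


lemma lipschitz_deriv_bound {F : ℝ → E2} {L : NNReal} (hF : LipschitzWith L F) (θ : ℝ) :
    ‖deriv F θ‖ ≤ L := by
  have h1 : ‖fderiv ℝ F θ‖ ≤ L := norm_fderiv_le_of_lipschitz ℝ hF
  rw [← fderiv_apply_one_eq_deriv]
  calc ‖fderiv ℝ F θ 1‖ ≤ ‖fderiv ℝ F θ‖ * ‖(1:ℝ)‖ := (fderiv ℝ F θ).le_opNorm 1
    _ ≤ L := by simpa using h1

lemma tendsto_avg_right {F : ℝ → E2} {L : NNReal} (hF : LipschitzWith L F) (b : ℝ) :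
    Filter.Tendsto (fun n : ℕ => ((n:ℝ)+1) • ∫ t in b..(b + 1/((n:ℝ)+1)), F t)
      Filter.atTop (nhds (F b)) := by
  have hFc : Continuous F := hF.continuous
  rw [tendsto_iff_norm_sub_tendsto_zero]
  have key : ∀ n : ℕ, ‖((n:ℝ)+1) • (∫ t in b..(b + 1/((n:ℝ)+1)), F t) - F b‖
      ≤ (L:ℝ) / ((n:ℝ)+1) := by
    intro n
    set h : ℝ := 1/((n:ℝ)+1) with hh
    have hn1 : (0:ℝ) < (n:ℝ)+1 := by positivity
    have hhpos : 0 < h := by rw [hh]; positivity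
    have e : ((n:ℝ)+1) • (∫ t in b..(b + h), F t) - F b
        = ((n:ℝ)+1) • ∫ t in b..(b + h), (F t - F b) := by
      rw [intervalIntegral.integral_sub (hFc.intervalIntegrable _ _) intervalIntegrable_const,
        intervalIntegral.integral_const, smul_sub, smul_smul]
      have e' : ((n:ℝ)+1) * (b + h - b) = 1 := by
        rw [hh]; field_simp; ring
      rw [e', one_smul]
    rw [e]
    have h2 : ‖∫ t in b..(b + h), (F t - F b)‖ ≤ (L:ℝ) * h * |b + h - b| := by
      apply intervalIntegral.norm_integral_le_of_norm_le_const
      intro t ht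
      rw [Set.uIoc_of_le (by linarith)] at ht
      calc ‖F t - F b‖ ≤ (L:ℝ) * |t - b| := by
            have := hF.dist_le_mul t b
            rwa [dist_eq_norm, Real.dist_eq] at this
        _ ≤ (L:ℝ) * h := by
            apply mul_le_mul_of_nonneg_left _ L.coe_nonneg
            rw [abs_le]; constructor <;> [linarith [ht.1]; linarith [ht.2]]
    rw [norm_smul, Real.norm_eq_abs, abs_of_pos hn1]
    have e'' : |b + h - b| = h := by
      rw [show b + h - b = h by ring]; exact abs_of_pos hhpos
    rw [e''] at h2
    calc ((n:ℝ)+1) * ‖∫ t in b..(b + h), (F t - F b)‖ ≤ ((n:ℝ)+1) * ((L:ℝ) * h * h) :=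
          mul_le_mul_of_nonneg_left h2 (by positivity)
      _ = (L:ℝ) / ((n:ℝ)+1) := by rw [hh]; field_simp
  apply squeeze_zero (fun n => norm_nonneg _) key
  have h3 := Filter.Tendsto.const_mul (L:ℝ) tendsto_one_div_add_atTop_nhds_zero_nat
  rw [mul_zero] at h3
  exact h3.congr fun n => by ring

lemma lipschitz_FTC {F : ℝ → E2} {L : NNReal} (hF : LipschitzWith L F) (a b : ℝ) :
    ∫ θ in a..b, deriv F θ = F b - F a := by
  have hFc : Continuous F := hF.continuous
  have hae : ∀ᵐ θ ∂(volume : Measure ℝ), HasDerivAt F (deriv F θ) θ := by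
    filter_upwards [hF.ae_differentiableAt] with θ hθ
    exact hθ.hasDerivAt
  set G : ℕ → ℝ → E2 := fun n θ => ((n:ℝ)+1) • (F (θ + 1/((n:ℝ)+1)) - F θ) with hG
  have hGc : ∀ n, Continuous (G n) :=
    fun n => by simp only [hG]; fun_prop
  have hconv : Filter.Tendsto (fun n => ∫ θ in a..b, G n θ) Filter.atTop
      (nhds (∫ θ in a..b, deriv F θ)) := by
    apply intervalIntegral.tendsto_integral_filter_of_dominated_convergence
      (bound := fun _ => (L:ℝ))
    · exact Filter.Eventually.of_forall fun n => ((hGc n).aestronglyMeasurable).restrict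
    · apply Filter.Eventually.of_forall
      intro n
      apply Filter.Eventually.of_forall
      intro θ _
      have hn1 : (0:ℝ) < (n:ℝ)+1 := by positivity
      simp only [hG]
      rw [norm_smul, Real.norm_eq_abs, abs_of_pos hn1]
      have hb : ‖F (θ + 1/((n:ℝ)+1)) - F θ‖ ≤ (L:ℝ) * (1/((n:ℝ)+1)) := by
        have hd := hF.dist_le_mul (θ + 1/((n:ℝ)+1)) θ
        rw [dist_eq_norm, Real.dist_eq] at hd
        calc ‖F (θ + 1/((n:ℝ)+1)) - F θ‖ ≤ (L:ℝ) * |θ + 1/((n:ℝ)+1) - θ| := hd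
          _ = (L:ℝ) * (1/((n:ℝ)+1)) := by
              congr 1
              rw [show θ + 1/((n:ℝ)+1) - θ = 1/((n:ℝ)+1) by ring,
                abs_of_pos (by positivity)]
      calc ((n:ℝ)+1) * ‖F (θ + 1/((n:ℝ)+1)) - F θ‖
          ≤ ((n:ℝ)+1) * ((L:ℝ) * (1/((n:ℝ)+1))) :=
            mul_le_mul_of_nonneg_left hb (by positivity)
        _ = (L:ℝ) := by field_simp
    · exact intervalIntegrable_const
    · filter_upwards [hae] with θ hθ
      intro _
      have hs := hasDerivAt_iff_tendsto_slope.mp hθ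
      have hseq : Filter.Tendsto (fun n : ℕ => θ + 1/((n:ℝ)+1)) Filter.atTop
          (nhdsWithin θ {θ}ᶜ) := by
        apply tendsto_nhdsWithin_of_tendsto_nhds_of_eventually_within
        · have h0 : Filter.Tendsto (fun n : ℕ => 1/((n:ℝ)+1)) Filter.atTop (nhds 0) :=
            tendsto_one_div_add_atTop_nhds_zero_nat
          have := tendsto_const_nhds (x := θ) (f := Filter.atTop (α := ℕ)) |>.add h0
          simpa using this
        · apply Filter.Eventually.of_forall
          intro n
          simp only [Set.mem_compl_iff, Set.mem_singleton_iff]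
          intro hcon
          have : (1:ℝ)/((n:ℝ)+1) = 0 := by linarith [congrArg (fun t => t - θ) hcon]
          have hn1 : (0:ℝ) < (n:ℝ)+1 := by positivity
          rw [div_eq_zero_iff] at this
          rcases this with h' | h' <;> [exact one_ne_zero h'; linarith]
      have hcomp := hs.comp hseq
      apply hcomp.congr
      intro n
      show slope F θ (θ + 1/((n:ℝ)+1)) = G n θ
      rw [slope_def_module]
      simp only [hG]
      rw [show θ + 1/((n:ℝ)+1) - θ = 1/((n:ℝ)+1) by ring, one_div, inv_inv]
  have halg : ∀ n : ℕ, (∫ θ in a..b, G n θ)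
      = (((n:ℝ)+1) • ∫ t in b..(b + 1/((n:ℝ)+1)), F t)
        - (((n:ℝ)+1) • ∫ t in a..(a + 1/((n:ℝ)+1)), F t) := by
    intro n
    set h : ℝ := 1/((n:ℝ)+1) with hh
    simp only [hG]
    have c1 : Continuous fun x : ℝ => F (x + 1/((n:ℝ)+1)) := by
      exact hFc.comp (continuous_id.add continuous_const)
    rw [intervalIntegral.integral_smul, intervalIntegral.integral_sub
      (c1.intervalIntegrable a b) (hFc.intervalIntegrable a b), ← smul_sub]
    congr 1
    have e1 : (∫ θ in a..b, F (θ + h)) = ∫ t in (a+h)..(b+h), F t :=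
      intervalIntegral.integral_comp_add_right (a := a) (b := b) (f := F) h
    have e2 : (∫ t in (a+h)..b, F t) + (∫ t in b..(b+h), F t) = ∫ t in (a+h)..(b+h), F t :=
      intervalIntegral.integral_add_adjacent_intervals (hFc.intervalIntegrable _ _)
        (hFc.intervalIntegrable _ _)
    have e3 : (∫ t in a..(a+h), F t) + (∫ t in (a+h)..b, F t) = ∫ t in a..b, F t :=
      intervalIntegral.integral_add_adjacent_intervals (hFc.intervalIntegrable _ _)
        (hFc.intervalIntegrable _ _)
    rw [e1, ← e2, ← e3]
    abel
  have hlim2 : Filter.Tendsto (fun n => ∫ θ in a..b, G n θ) Filter.atTop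
      (nhds (F b - F a)) := by
    have hT := (tendsto_avg_right hF b).sub (tendsto_avg_right hF a)
    exact hT.congr fun n => (halg n).symm
  exact tendsto_nhds_unique hconv hlim2

/-! ### The Steiner point belongs to the body -/

lemma steiner_mem {K : Set E2} (hKc : IsCompact K) (hKconv : Convex ℝ K)
    (hne : K.Nonempty) : steinerPt K ∈ K := by
  obtain ⟨R0, hR0⟩ := hKc.isBounded.exists_norm_le
  set R : ℝ := max R0 0 with hRdef
  have hR : ∀ s ∈ K, ‖s‖ ≤ R := fun s hs => le_trans (hR0 s hs) (le_max_left _ _)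
  have hR0' : 0 ≤ R := le_max_right _ _
  set f : ℝ → ℝ := fun θ => suppf 0 K (uvec θ) with hfdef
  have hfc : Continuous f := (suppf_cont hKc hne).comp uvec_continuous
  have hfbd : ∀ θ, |f θ| ≤ R := fun θ => suppf_abs_le hKc hne hR θ
  have hfsub : ∀ θ φ : ℝ, f θ - f φ ≤ 2 * R * |θ - φ| := by
    intro θ φ
    calc f θ - f φ ≤ R * ‖uvec θ - uvec φ‖ := suppf_sub_le hKc hne hR _ _
      _ ≤ R * (2 * |θ - φ|) := mul_le_mul_of_nonneg_left (norm_sub_uvec θ φ) hR0'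
      _ = 2 * R * |θ - φ| := by ring
  have hflip : ∀ θ φ : ℝ, |f θ - f φ| ≤ 2 * R * |θ - φ| := by
    intro θ φ
    rw [abs_le]
    have k1 := hfsub θ φ
    have k2 := hfsub φ θ
    rw [abs_sub_comm φ θ] at k2
    constructor <;> linarith
  -- the vector field Fv θ = f θ • vvec θ is Lipschitz
  set Fv : ℝ → E2 := fun θ => f θ • vvec θ with hFv
  have hnormv : ∀ θ, ‖vvec θ‖ = 1 := by
    intro θ; rw [vvec_eq_uvec]; exact norm_uvec _
  have hvlip : ∀ θ φ : ℝ, ‖vvec θ - vvec φ‖ ≤ 2 * |θ - φ| := by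
    intro θ φ
    rw [vvec_eq_uvec, vvec_eq_uvec]
    calc ‖uvec (θ + π/2) - uvec (φ + π/2)‖ ≤ 2 * |θ + π/2 - (φ + π/2)| := norm_sub_uvec _ _
      _ = 2 * |θ - φ| := by rw [show θ + π/2 - (φ + π/2) = θ - φ by ring]
  have hFvLip : LipschitzWith (4 * R).toNNReal Fv := by
    apply LipschitzWith.of_dist_le_mul
    intro θ φ
    rw [dist_eq_norm, Real.dist_eq, Real.coe_toNNReal _ (by positivity)]
    have e : Fv θ - Fv φ = f θ • (vvec θ - vvec φ) + (f θ - f φ) • vvec φ := by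
      simp only [hFv, smul_sub, sub_smul]
      abel
    rw [e]
    calc ‖f θ • (vvec θ - vvec φ) + (f θ - f φ) • vvec φ‖
        ≤ ‖f θ • (vvec θ - vvec φ)‖ + ‖(f θ - f φ) • vvec φ‖ := norm_add_le _ _
      _ = |f θ| * ‖vvec θ - vvec φ‖ + |f θ - f φ| * ‖vvec φ‖ := by
          rw [norm_smul, norm_smul, Real.norm_eq_abs, Real.norm_eq_abs]
      _ ≤ R * (2 * |θ - φ|) + 2 * R * |θ - φ| * 1 := by
          apply add_le_add
          · exact mul_le_mul (hfbd θ) (hvlip θ φ) (norm_nonneg _) hR0'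
          · apply mul_le_mul (hflip θ φ) (le_of_eq (hnormv φ)) (norm_nonneg _) (by positivity)
      _ = 4 * R * |θ - φ| := by ring
  -- a.e. differentiability of f
  have hflf : LipschitzWith (2 * R).toNNReal f := by
    apply LipschitzWith.of_dist_le_mul
    intro θ φ
    rw [Real.dist_eq, Real.dist_eq, Real.coe_toNNReal _ (by positivity)]
    exact hflip θ φ
  have haedf : ∀ᵐ θ ∂(volume : Measure ℝ), DifferentiableAt ℝ f θ :=
    hflf.ae_differentiableAt
  -- the boundary-point map
  set s : ℝ → E2 := fun θ => (2 * f θ) • uvec θ + deriv Fv θ with hsdef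
  -- at differentiability points of f, s θ ∈ K
  have hmem : ∀ θ, DifferentiableAt ℝ f θ → s θ ∈ K := by
    intro θ hθ
    obtain ⟨p, hpK, hp, hpmax⟩ := suppf_exists_max hKc hne (uvec θ)
    -- derivative of the comparison function
    have hg : HasDerivAt (fun φ => ⟪p, uvec φ⟫) ⟪p, vvec θ⟫ θ := by
      have h1 : HasDerivAt (fun φ => p 0 * Real.cos φ + p 1 * Real.sin φ)
          (p 0 * (-Real.sin θ) + p 1 * Real.cos θ) θ :=
        ((Real.hasDerivAt_cos θ).const_mul (p 0)).add ((Real.hasDerivAt_sin θ).const_mul (p 1))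
      have e1 : (fun φ => p 0 * Real.cos φ + p 1 * Real.sin φ) = fun φ => ⟪p, uvec φ⟫ := by
        funext φ; rw [inner_uvec]
      have e2 : p 0 * (-Real.sin θ) + p 1 * Real.cos θ = ⟪p, vvec θ⟫ := by
        rw [inner_vvec]; ring
      rw [← e1, ← e2]
      exact h1
    -- f - g has a global minimum at θ
    have hd : ∀ φ, f θ - ⟪p, uvec θ⟫ ≤ f φ - ⟪p, uvec φ⟫ := by
      intro φ
      have h1 : ⟪p, uvec φ⟫ ≤ f φ := le_suppf hKc hne hpK _
      have h2 : f θ = ⟪p, uvec θ⟫ := hp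
      linarith
    have hloc : IsLocalMin (fun φ => f φ - ⟪p, uvec φ⟫) θ :=
      Filter.Eventually.of_forall fun φ => hd φ
    have hdiff : HasDerivAt (fun φ => f φ - ⟪p, uvec φ⟫) (deriv f θ - ⟪p, vvec θ⟫) θ :=
      hθ.hasDerivAt.sub hg
    have hder0 : deriv f θ - ⟪p, vvec θ⟫ = 0 := by
      have := hloc.deriv_eq_zero
      rw [hdiff.deriv] at this
      exact this
    have hfderiv : deriv f θ = ⟪p, vvec θ⟫ := by linarith
    -- compute deriv Fv θ
    have hFd : HasDerivAt Fv (f θ • (-uvec θ) + deriv f θ • vvec θ) θ :=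
      HasDerivAt.smul hθ.hasDerivAt (hasDerivAt_vvec θ)
    have hsθ : s θ = f θ • uvec θ + deriv f θ • vvec θ := by
      simp only [hsdef]
      rw [hFd.deriv]
      module
    have hfp : f θ = ⟪p, uvec θ⟫ := hp
    rw [hsθ, hfp, hfderiv]
    rw [uvec_vvec_basis p θ]
    exact hpK
  -- integrability of deriv Fv and of s
  have hderiv_meas : AEStronglyMeasurable (deriv Fv) (volume : Measure ℝ) :=
    (measurable_deriv Fv).aestronglyMeasurable
  have hderiv_bd : ∀ θ, ‖deriv Fv θ‖ ≤ ((4 * R).toNNReal : ℝ) :=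
    fun θ => lipschitz_deriv_bound hFvLip θ
  have hderiv_int : ∀ a b : ℝ, IntervalIntegrable (deriv Fv) volume a b := by
    intro a b
    rw [intervalIntegrable_iff]
    apply Measure.integrableOn_of_bounded (M := ((4 * R).toNNReal : ℝ))
    · exact (measure_Ioc_lt_top).ne
    · exact hderiv_meas
    · exact Filter.Eventually.of_forall fun θ => hderiv_bd θ
  have hfu_cont : Continuous fun θ => (2 * f θ) • uvec θ :=
    (continuous_const.mul hfc).smul uvec_continuous
  -- value of ∫ s over [0, 2π]
  have hFTC : (∫ θ in (0:ℝ)..(2*π), deriv Fv θ) = 0 := by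
    rw [lipschitz_FTC hFvLip 0 (2*π)]
    have hf2 : f (2*π) = f 0 := by
      simp only [hfdef]
      congr 1
      have := uvec_periodic 0
      rwa [zero_add] at this
    have hv2 : vvec (2*π) = vvec 0 := by
      rw [vvec_eq_uvec, vvec_eq_uvec]
      have := uvec_periodic (π/2)
      rw [show π/2 + 2*π = 2*π + π/2 by ring] at this
      rwa [zero_add]
    simp only [hFv, hf2, hv2, sub_self]
  have hIu : (∫ θ in (0:ℝ)..(2*π), f θ • uvec θ) = π • steinerPt K := by
    rw [steinerPt, smul_smul, mul_inv_cancel₀ Real.pi_ne_zero, one_smul]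
  have hsint : (∫ θ in (0:ℝ)..(2*π), s θ) = (2*π) • steinerPt K := by
    simp only [hsdef]
    rw [intervalIntegral.integral_add (hfu_cont.intervalIntegrable 0 (2*π))
      (hderiv_int 0 (2*π)), hFTC, add_zero]
    have e : (fun θ => (2 * f θ) • uvec θ) = fun θ => (2:ℝ) • (f θ • uvec θ) := by
      funext θ; rw [smul_smul]
    rw [e, intervalIntegral.integral_smul, hIu, smul_smul]
  -- conclude by convexity: the average of s over [0, 2π] is the Steiner point
  have h2π : (0:ℝ) < 2*π := by positivity
  have havg : ⨍ θ in Ioc (0:ℝ) (2*π), s θ ∈ K := by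
    apply hKconv.set_average_mem hKc.isClosed
    · rw [Real.volume_Ioc]
      simp only [ne_eq, ENNReal.ofReal_eq_zero, not_le]
      linarith
    · exact (measure_Ioc_lt_top).ne
    · exact ae_restrict_of_ae (haedf.mono fun θ hθ => hmem θ hθ)
    · apply Integrable.add
      · exact hfu_cont.integrableOn_Ioc
      · apply Measure.integrableOn_of_bounded (M := ((4 * R).toNNReal : ℝ))
        · exact (measure_Ioc_lt_top).ne
        · exact hderiv_meas
        · exact Filter.Eventually.of_forall fun θ => hderiv_bd θ
  have havg_eq : (⨍ θ in Ioc (0:ℝ) (2*π), s θ) = steinerPt K := by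
    rw [setAverage_eq, ← intervalIntegral.integral_of_le h2π.le, hsint, measureReal_def, Real.volume_Ioc,
      sub_zero, ENNReal.toReal_ofReal h2π.le, smul_smul,
      inv_mul_cancel₀ (ne_of_gt h2π), one_smul]
  rwa [havg_eq] at havg


/-! ### Trigonometric integral identities -/

lemma integral_inner_uvec_mul (w c : E2) (a b : ℝ) :
    ∫ θ in a..b, ⟪w, uvec θ⟫ * ⟪c, uvec θ⟫
      = (w 0 * c 0) * ((Real.cos b * Real.sin b - Real.cos a * Real.sin a + b - a)/2)
        + (w 0 * c 1 + w 1 * c 0) * ((Real.sin b^2 - Real.sin a^2)/2)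
        + (w 1 * c 1) * ((Real.sin a * Real.cos a - Real.sin b * Real.cos b + b - a)/2) := by
  have key : ∀ θ : ℝ, ⟪w, uvec θ⟫ * ⟪c, uvec θ⟫
      = w 0 * c 0 * Real.cos θ^2 + (w 0 * c 1 + w 1 * c 0) * (Real.sin θ * Real.cos θ)
        + w 1 * c 1 * Real.sin θ^2 := by
    intro θ; rw [inner_uvec, inner_uvec]; ring
  rw [intervalIntegral.integral_congr (g := fun θ => w 0 * c 0 * Real.cos θ^2
    + (w 0 * c 1 + w 1 * c 0) * (Real.sin θ * Real.cos θ) + w 1 * c 1 * Real.sin θ^2)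
    (fun θ _ => key θ)]
  have i1 : IntervalIntegrable (fun θ : ℝ => w 0 * c 0 * Real.cos θ^2) volume a b :=
    (Continuous.intervalIntegrable (by continuity) a b)
  have i2 : IntervalIntegrable (fun θ : ℝ => (w 0 * c 1 + w 1 * c 0) * (Real.sin θ * Real.cos θ))
      volume a b := (Continuous.intervalIntegrable (by continuity) a b)
  have i3 : IntervalIntegrable (fun θ : ℝ => w 1 * c 1 * Real.sin θ^2) volume a b :=
    (Continuous.intervalIntegrable (by continuity) a b)
  rw [intervalIntegral.integral_add (i1.add i2) i3, intervalIntegral.integral_add i1 i2]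
  rw [intervalIntegral.integral_const_mul, intervalIntegral.integral_const_mul,
    intervalIntegral.integral_const_mul]
  rw [integral_cos_sq, integral_sin_mul_cos₁, integral_sin_sq]

lemma integral_inner_uvec_two_pi (w c : E2) :
    ∫ θ in (0:ℝ)..(2*π), ⟪w, uvec θ⟫ * ⟪c, uvec θ⟫ = π * ⟪w, c⟫ := by
  rw [integral_inner_uvec_mul, inner_coords]
  simp [Real.sin_two_pi, Real.cos_two_pi]
  ring

lemma integral_inner_uvec_pi (w c : E2) :
    ∫ θ in (0:ℝ)..π, ⟪w, uvec θ⟫ * ⟪c, uvec θ⟫ = π / 2 * ⟪w, c⟫ := by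
  rw [integral_inner_uvec_mul, inner_coords]
  simp [Real.sin_pi, Real.cos_pi]
  ring

/-! ### The key scalar inequality -/

lemma key_ineq {h₁ h₂ : ℝ} (hh₁ : 0 ≤ h₁) (hh₂ : 0 ≤ h₂) (a : ℝ) :
    h₁^2/2 + h₂^2/2 + ((h₂ - h₁)*a + a^2/2)
      ≤ (max (h₁ - a) 0)^2/2 + (max (h₂ + a) 0)^2/2 := by
  rcases le_or_gt (h₁ - a) 0 with h | h
  · rcases le_or_gt (h₂ + a) 0 with h' | h'
    · rw [max_eq_right h, max_eq_right h']
      nlinarith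
    · rw [max_eq_right h, max_eq_left h'.le]
      nlinarith
  · rcases le_or_gt (h₂ + a) 0 with h' | h'
    · rw [max_eq_left h.le, max_eq_right h']
      nlinarith
    · rw [max_eq_left h.le, max_eq_left h'.le]
      nlinarith

/-! ### Main theorem -/

theorem steiner_unique_minimizer (K : Set E2) (hKc : IsCompact K)
    (hKconv : Convex ℝ K) (hKint : (interior K).Nonempty) (σ : E2)
    (hσ : σ = steinerPt K) :
    ∀ x : E2, x ≠ σ →
      (volume (vflower σ K)).toReal < (volume (vflower x K)).toReal := by
  intro x hx
  obtain ⟨z0, hz0⟩ := hKint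
  have hne : K.Nonempty := ⟨z0, interior_subset hz0⟩
  have hσK : σ ∈ K := hσ ▸ steiner_mem hKc hKconv hne
  set f : ℝ → ℝ := fun θ => suppf 0 K (uvec θ) with hfdef
  have hfc : Continuous f := (suppf_cont hKc hne).comp uvec_continuous
  have hσle : ∀ θ, ⟪σ, uvec θ⟫ ≤ f θ := fun θ => le_suppf hKc hne hσK _
  set c : E2 := x - σ with hcdef
  have hc : c ≠ 0 := sub_ne_zero.mpr hx
  have hxσc : x = σ + c := by rw [hcdef]; abel
  -- shorthand
  set Px : ℝ → ℝ := fun θ => (max (f θ - ⟪x, uvec θ⟫) 0)^2/2 with hPx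
  set Pσ : ℝ → ℝ := fun θ => (max (f θ - ⟪σ, uvec θ⟫) 0)^2/2 with hPσ
  have hPxc : Continuous Px := by
    apply Continuous.div_const
    apply Continuous.pow
    exact (hfc.sub (continuous_const.inner uvec_continuous)).max continuous_const
  have hPσc : Continuous Pσ := by
    apply Continuous.div_const
    apply Continuous.pow
    exact (hfc.sub (continuous_const.inner uvec_continuous)).max continuous_const
  have hAx : (volume (vflower x K)).toReal = ∫ θ in (0:ℝ)..(2*π), Px θ :=
    flower_area hKc hne x
  have hAσ : (volume (vflower σ K)).toReal = ∫ θ in (0:ℝ)..(2*π), Pσ θ :=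
    flower_area hKc hne σ
  -- fold [0,2π] to [0,π]
  have fold : ∀ P : ℝ → ℝ, Continuous P →
      (∫ θ in (0:ℝ)..(2*π), P θ) = ∫ θ in (0:ℝ)..π, (P θ + P (θ + π)) := by
    intro P hP
    have h1 : (∫ θ in (0:ℝ)..π, P θ) + (∫ θ in π..(2*π), P θ)
        = ∫ θ in (0:ℝ)..(2*π), P θ :=
      intervalIntegral.integral_add_adjacent_intervals
        (hP.intervalIntegrable 0 π) (hP.intervalIntegrable π (2*π))
    have h2 : (∫ θ in (0:ℝ)..π, P (θ + π)) = ∫ θ in π..(2*π), P θ := by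
      have := intervalIntegral.integral_comp_add_right (a := (0:ℝ)) (b := π) (f := P) π
      rw [this]
      norm_num [two_mul]
    have int2 : IntervalIntegrable (fun θ => P (θ + π)) volume 0 π :=
      (hP.comp (continuous_id.add continuous_const)).intervalIntegrable 0 π
    rw [← h1, ← h2]
    exact (intervalIntegral.integral_add (hP.intervalIntegrable 0 π) int2).symm
  -- definitions of h₁, h₂, a
  set h₁ : ℝ → ℝ := fun θ => f θ - ⟪σ, uvec θ⟫ with hh₁def
  set h₂ : ℝ → ℝ := fun θ => f (θ + π) + ⟪σ, uvec θ⟫ with hh₂def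
  set aa : ℝ → ℝ := fun θ => ⟪c, uvec θ⟫ with haadef
  have hh₁ : ∀ θ, 0 ≤ h₁ θ := fun θ => sub_nonneg.mpr (hσle θ)
  have hh₂ : ∀ θ, 0 ≤ h₂ θ := by
    intro θ
    have := hσle (θ + π)
    rw [uvec_add_pi, inner_neg_right] at this
    simp only [hh₂def]
    linarith
  have hPσθ : ∀ θ, Pσ θ = (h₁ θ)^2/2 := by
    intro θ
    simp only [hPσ, hh₁def]
    rw [max_eq_left (sub_nonneg.mpr (hσle θ))]
  have hPσθπ : ∀ θ, Pσ (θ + π) = (h₂ θ)^2/2 := by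
    intro θ
    simp only [hPσ, hh₂def]
    rw [uvec_add_pi, inner_neg_right, sub_neg_eq_add, max_eq_left (hh₂ θ)]
  have hPxθ : ∀ θ, Px θ = (max (h₁ θ - aa θ) 0)^2/2 := by
    intro θ
    simp only [hPx, hh₁def, haadef]
    rw [hxσc, inner_add_left]
    ring_nf
  have hPxθπ : ∀ θ, Px (θ + π) = (max (h₂ θ + aa θ) 0)^2/2 := by
    intro θ
    simp only [hPx, hh₂def, haadef]
    rw [uvec_add_pi, inner_neg_right, hxσc, inner_add_left]
    ring_nf
  -- pointwise inequality
  have point : ∀ θ, Pσ θ + Pσ (θ + π) + ((h₂ θ - h₁ θ) * aa θ + (aa θ)^2/2)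
      ≤ Px θ + Px (θ + π) := by
    intro θ
    rw [hPσθ, hPσθπ, hPxθ, hPxθπ]
    exact key_ineq (hh₁ θ) (hh₂ θ) (aa θ)
  -- integrate over [0, π]
  have haac : Continuous aa := continuous_const.inner uvec_continuous
  have hh₂c : Continuous h₂ :=
    (hfc.comp (continuous_id.add continuous_const)).add (continuous_const.inner uvec_continuous)
  have hh₁c : Continuous h₁ := hfc.sub (continuous_const.inner uvec_continuous)
  have hPσshift : Continuous fun θ => Pσ (θ + π) := hPσc.comp (continuous_id.add continuous_const)
  have hPxshift : Continuous fun θ => Px (θ + π) := hPxc.comp (continuous_id.add continuous_const)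
  have ctL : Continuous fun θ => (h₂ θ - h₁ θ) * aa θ := (hh₂c.sub hh₁c).mul haac
  have ctQ : Continuous fun θ => (aa θ)^2/2 := (haac.pow 2).div_const 2
  have imono : (∫ θ in (0:ℝ)..π, (Pσ θ + Pσ (θ + π) + ((h₂ θ - h₁ θ) * aa θ + (aa θ)^2/2)))
      ≤ ∫ θ in (0:ℝ)..π, (Px θ + Px (θ + π)) := by
    apply intervalIntegral.integral_mono_on Real.pi_pos.le
    · exact ((hPσc.add hPσshift).add (ctL.add ctQ)).intervalIntegrable 0 π
    · exact (hPxc.add hPxshift).intervalIntegrable 0 π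
    · intro θ _; exact point θ
  -- the three pieces of the LHS
  have hsplit : (∫ θ in (0:ℝ)..π, (Pσ θ + Pσ (θ + π) + ((h₂ θ - h₁ θ) * aa θ + (aa θ)^2/2)))
      = (∫ θ in (0:ℝ)..π, (Pσ θ + Pσ (θ + π)))
        + ((∫ θ in (0:ℝ)..π, (h₂ θ - h₁ θ) * aa θ) + ∫ θ in (0:ℝ)..π, (aa θ)^2/2) := by
    rw [← intervalIntegral.integral_add (ctL.intervalIntegrable 0 π) (ctQ.intervalIntegrable 0 π),
      ← intervalIntegral.integral_add (f := fun θ => Pσ θ + Pσ (θ + π))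
          (g := fun θ => (h₂ θ - h₁ θ) * aa θ + aa θ ^ 2 / 2) ((hPσc.add hPσshift).intervalIntegrable 0 π)
        ((ctL.add ctQ).intervalIntegrable 0 π)]
  -- piece 3 : ∫ aa² / 2 = π/4 ‖c‖²
  have piece3 : (∫ θ in (0:ℝ)..π, (aa θ)^2/2) = π/4 * ‖c‖^2 := by
    have : (fun θ => (aa θ)^2/2) = fun θ => (⟪c, uvec θ⟫ * ⟪c, uvec θ⟫)/2 := by
      funext θ; simp only [haadef]; ring
    rw [this, intervalIntegral.integral_div, integral_inner_uvec_pi,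
      real_inner_self_eq_norm_sq]
    ring
  -- piece 2 : ∫ (h₂ - h₁) * aa = 0
  have hIeq : (∫ θ in (0:ℝ)..(2*π), f θ • uvec θ) = π • σ := by
    rw [hσ, steinerPt, smul_smul, mul_inv_cancel₀ Real.pi_ne_zero, one_smul]
  have hq : (∫ θ in (0:ℝ)..(2*π), f θ * ⟪c, uvec θ⟫) = π * ⟪c, σ⟫ := by
    have hint : IntervalIntegrable (fun θ => f θ • uvec θ) volume 0 (2*π) :=
      (hfc.smul uvec_continuous).intervalIntegrable 0 (2*π)
    have := (innerSL ℝ c).intervalIntegral_comp_comm hint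
    rw [hIeq] at this
    simp only [innerSL_apply_apply, real_inner_smul_right] at this
    rw [this]
  have piece2 : (∫ θ in (0:ℝ)..π, (h₂ θ - h₁ θ) * aa θ) = 0 := by
    set q : ℝ → ℝ := fun θ => f θ * ⟪c, uvec θ⟫ with hqdef
    have hqc : Continuous q := hfc.mul haac
    have e1 : ∀ θ, (h₂ θ - h₁ θ) * aa θ
        = -(q (θ + π)) + (-(q θ) + 2 * (⟪σ, uvec θ⟫ * ⟪c, uvec θ⟫)) := by
      intro θ
      have : q (θ + π) = -(f (θ + π) * aa θ) := by
        simp only [hqdef, haadef]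
        rw [uvec_add_pi, inner_neg_right]
        ring
      simp only [hh₁def, hh₂def, haadef] at *
      rw [this]
      ring
    rw [intervalIntegral.integral_congr (g := fun θ =>
        -(q (θ + π)) + (-(q θ) + 2 * (⟪σ, uvec θ⟫ * ⟪c, uvec θ⟫))) (fun θ _ => e1 θ)]
    have cq1 : Continuous fun θ => -(q (θ + π)) :=
      (hqc.comp (continuous_id.add continuous_const)).neg
    have cq2 : Continuous fun θ : ℝ => -(q θ) := hqc.neg
    have cq3 : Continuous fun θ : ℝ => 2 * (⟪σ, uvec θ⟫ * ⟪c, uvec θ⟫) :=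
      continuous_const.mul ((continuous_const.inner uvec_continuous).mul
        (continuous_const.inner uvec_continuous))
    rw [intervalIntegral.integral_add (cq1.intervalIntegrable 0 π)
      (g := fun θ => -(q θ) + 2 * (⟪σ, uvec θ⟫ * ⟪c, uvec θ⟫))
        ((cq2.add cq3).intervalIntegrable 0 π),
      intervalIntegral.integral_add (cq2.intervalIntegrable 0 π) (cq3.intervalIntegrable 0 π)]
    have e2 : (∫ θ in (0:ℝ)..π, -(q (θ + π))) = -∫ θ in π..(2*π), q θ := by
      rw [intervalIntegral.integral_neg]
      congr 1
      have := intervalIntegral.integral_comp_add_right (a := (0:ℝ)) (b := π) (f := q) π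
      rw [this]
      norm_num [two_mul]
    have e3 : (∫ θ in (0:ℝ)..π, -(q θ)) = -∫ θ in (0:ℝ)..π, q θ :=
      intervalIntegral.integral_neg
    have e4 : (∫ θ in (0:ℝ)..π, 2 * (⟪σ, uvec θ⟫ * ⟪c, uvec θ⟫)) = π * ⟪σ, c⟫ := by
      rw [intervalIntegral.integral_const_mul, integral_inner_uvec_pi]
      ring
    have e5 : (∫ θ in (0:ℝ)..π, q θ) + (∫ θ in π..(2*π), q θ) = π * ⟪c, σ⟫ := by
      rw [intervalIntegral.integral_add_adjacent_intervals (hqc.intervalIntegrable 0 π)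
        (hqc.intervalIntegrable π (2*π))]
      exact hq
    rw [e2, e3, e4]
    rw [real_inner_comm σ c] at e5
    linarith [e5]
  -- conclusion
  have hAσ' : (volume (vflower σ K)).toReal = ∫ θ in (0:ℝ)..π, (Pσ θ + Pσ (θ + π)) := by
    rw [hAσ, fold Pσ hPσc]
  have hAx' : (volume (vflower x K)).toReal = ∫ θ in (0:ℝ)..π, (Px θ + Px (θ + π)) := by
    rw [hAx, fold Px hPxc]
  have hpos : 0 < π/4 * ‖c‖^2 := by
    have := norm_pos_iff.mpr hc
    positivity
  rw [hAσ', hAx']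
  calc (∫ θ in (0:ℝ)..π, (Pσ θ + Pσ (θ + π)))
      < (∫ θ in (0:ℝ)..π, (Pσ θ + Pσ (θ + π))) + (0 + π/4 * ‖c‖^2) := by linarith
    _ = (∫ θ in (0:ℝ)..π, (Pσ θ + Pσ (θ + π)))
        + ((∫ θ in (0:ℝ)..π, (h₂ θ - h₁ θ) * aa θ) + ∫ θ in (0:ℝ)..π, (aa θ)^2/2) := by
        rw [piece2, piece3]
    _ = ∫ θ in (0:ℝ)..π, (Pσ θ + Pσ (θ + π) + ((h₂ θ - h₁ θ) * aa θ + (aa θ)^2/2)) := hsplit.symm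
    _ ≤ _ := imono
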